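/- Let A and B be d×d complex matrices. (i) ‖AB‖ = ‖ |A| |Bᴴ| ‖. (ii) If in addition A and B are normal matrices, then ‖AB‖ = ‖ |Aᴴ| |B| ‖. -/

import Mathlib

open scoped Matrix.Norms.L2Operator Matrix ComplexOrder

/-- The absolute value `|X| = (Xᴴ X)^{1/2}` of a complex square matrix. -/
noncomputable def matAbsC {d : ℕ} (X : Matrix (Fin d) (Fin d) ℂ) : Matrix (Fin d) (Fin d) ℂ :=
  (Matrix.posSemidef_conjTranspose_mul_self X).1.eigenvectorUnitary.1 *
    Matrix.diagonal ((↑) ∘ Real.sqrt ∘ (Matrix.posSemidef_conjTranspose_mul_self X).1.eigenvalues) *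
    (star (Matrix.posSemidef_conjTranspose_mul_self X).1.eigenvectorUnitary : Matrix (Fin d) (Fin d) ℂ)

lemma matAbsC_herm {d : ℕ} (X : Matrix (Fin d) (Fin d) ℂ) : (matAbsC X)ᴴ = matAbsC X := by
  unfold matAbsC
  rw [Matrix.conjTranspose_mul, Matrix.conjTranspose_mul, Matrix.diagonal_conjTranspose,
    Matrix.star_eq_conjTranspose, Matrix.conjTranspose_conjTranspose, ← Matrix.mul_assoc]
  congr 2
  congr 1
  funext i
  simp

lemma matAbsC_mul_self {d : ℕ} (X : Matrix (Fin d) (Fin d) ℂ) :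
    matAbsC X * matAbsC X = Xᴴ * X := by
  have hP := Matrix.posSemidef_conjTranspose_mul_self X
  unfold matAbsC
  conv_rhs => rw [(Matrix.posSemidef_conjTranspose_mul_self X).1.spectral_theorem,
    Unitary.conjStarAlgAut_apply]
  set U := (Matrix.posSemidef_conjTranspose_mul_self X).1.eigenvectorUnitary
  have hU : (star U : Matrix (Fin d) (Fin d) ℂ) * U = 1 := Unitary.coe_star_mul_self U
  rw [show ∀ (P Q R : Matrix (Fin d) (Fin d) ℂ), P * Q * R * (P * Q * R) = P * Q * (R * P) * Q * R
    by intros; noncomm_ring, hU, Matrix.mul_one, Matrix.mul_assoc (U : Matrix (Fin d) (Fin d) ℂ),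
    Matrix.diagonal_mul_diagonal]
  congr 3
  ext i
  have h0 := (Matrix.posSemidef_conjTranspose_mul_self X).eigenvalues_nonneg i
  simp only [Function.comp_apply]
  rw [← Complex.ofReal_mul, Real.mul_self_sqrt h0]
  rfl

lemma mul_self_eq_mul_self_iff_of_nonneg {a b : ℝ} (ha : 0 ≤ a) (hb : 0 ≤ b) :
    a * a = b * b ↔ a = b := by
  constructor
  · intro h
    nlinarith
  · rintro rfl; rfl

/-- `‖X Y‖ = ‖|X| Y‖`. -/
lemma norm_abs_mul {d : ℕ} (X Y : Matrix (Fin d) (Fin d) ℂ) :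
    ‖X * Y‖ = ‖matAbsC X * Y‖ := by
  have h : ‖X * Y‖ * ‖X * Y‖ = ‖matAbsC X * Y‖ * ‖matAbsC X * Y‖ := by
    rw [← Matrix.l2_opNorm_conjTranspose_mul_self (X * Y),
        ← Matrix.l2_opNorm_conjTranspose_mul_self (matAbsC X * Y)]
    congr 1
    rw [Matrix.conjTranspose_mul, Matrix.conjTranspose_mul, matAbsC_herm]
    rw [show Yᴴ * Xᴴ * (X * Y) = Yᴴ * (Xᴴ * X) * Y by noncomm_ring,
        show Yᴴ * matAbsC X * (matAbsC X * Y) = Yᴴ * (matAbsC X * matAbsC X) * Y by noncomm_ring,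
        matAbsC_mul_self]
  exact (mul_self_eq_mul_self_iff_of_nonneg (norm_nonneg (X * Y))
    (norm_nonneg (matAbsC X * Y))).mp h

lemma norm_AB_eq {d : ℕ} (A B : Matrix (Fin d) (Fin d) ℂ) :
    ‖A * B‖ = ‖matAbsC A * matAbsC Bᴴ‖ := by
  rw [norm_abs_mul A B, ← Matrix.l2_opNorm_conjTranspose (matAbsC A * B),
    Matrix.conjTranspose_mul, matAbsC_herm, norm_abs_mul Bᴴ (matAbsC A),
    ← Matrix.l2_opNorm_conjTranspose (matAbsC Bᴴ * matAbsC A),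
    Matrix.conjTranspose_mul, matAbsC_herm, matAbsC_herm]

lemma matAbsC_conjTranspose_of_normal {d : ℕ} (A : Matrix (Fin d) (Fin d) ℂ)
    (h : A * Aᴴ = Aᴴ * A) : matAbsC Aᴴ = matAbsC A := by
  have h1 : Aᴴᴴ * Aᴴ = Aᴴ * A := by rw [Matrix.conjTranspose_conjTranspose, h]
  have key : ∀ (M N : Matrix (Fin d) (Fin d) ℂ) (hM : M.IsHermitian) (hN : N.IsHermitian),
      M = N → (hM.eigenvectorUnitary : Matrix (Fin d) (Fin d) ℂ) *
        Matrix.diagonal ((↑) ∘ Real.sqrt ∘ hM.eigenvalues) *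
        (star hM.eigenvectorUnitary : Matrix (Fin d) (Fin d) ℂ) =
        (hN.eigenvectorUnitary : Matrix (Fin d) (Fin d) ℂ) *
        Matrix.diagonal ((↑) ∘ Real.sqrt ∘ hN.eigenvalues) *
        (star hN.eigenvectorUnitary : Matrix (Fin d) (Fin d) ℂ) := by
    intro M N hM hN hMN
    subst hMN
    rfl
  exact key _ _ _ _ h1

theorem norm_identities (d : ℕ) (A B : Matrix (Fin d) (Fin d) ℂ) :
    ‖A * B‖ = ‖matAbsC A * matAbsC Bᴴ‖ ∧
      (A * Aᴴ = Aᴴ * A → B * Bᴴ = Bᴴ * B → ‖A * B‖ = ‖matAbsC Aᴴ * matAbsC B‖) := by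
  refine ⟨norm_AB_eq A B, fun hA hB => ?_⟩
  rw [norm_AB_eq A B, matAbsC_conjTranspose_of_normal A hA,
    ← matAbsC_conjTranspose_of_normal B hB]
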